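/- Let k be a field of characteristic p > 0, H a p-soluble finite group, V a kH-module, and a an element of V fixed by some Sylow p-subgroup of H such that the H-orbit of a spans V. Then the fixed-point subspace C_V(H) has dimension at most 1. -/

import Mathlib

/-- A finite group is `p`-soluble if it has a subnormal series in which every
quotient is either a `p`-group (every element of the quotient has `p`-power order)
or a `p'`-group (the quotient has order prime to `p`); equivalently, every
composition factor is a `p`-group or a `p'`-group. -/
def IsPSolvable (p : ℕ) (G : Type*) [Group G] : Prop :=
  ∃ (n : ℕ) (c : Fin (n + 1) → Subgroup G),
    c 0 = ⊥ ∧ c (Fin.last n) = ⊤ ∧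
    ∀ i : Fin n, c i.castSucc ≤ c i.succ ∧
      ((c i.castSucc).subgroupOf (c i.succ)).Normal ∧
      ((∀ x ∈ c i.succ, ∃ m : ℕ, x ^ (p ^ m) ∈ c i.castSucc) ∨
        ¬ p ∣ (c i.castSucc).relIndex (c i.succ))

/-- The subspace of `H`-fixed points `C_V(H)` of a linear action. -/
def fixedSubmodule (k H : Type*) {V : Type*} [Semiring k] [AddCommMonoid V] [Module k V]
    [Monoid H] [DistribMulAction H V] [SMulCommClass H k V] : Submodule k V where
  carrier := {v | ∀ h : H, h • v = v}
  add_mem' := fun {x y} hx hy h => by rw [smul_add, hx h, hy h]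
  zero_mem' := fun h => smul_zero h
  smul_mem' := fun c v hv => fun h => by rw [smul_comm, hv h]

open Subgroup

universe u v

section Helpers

variable {G : Type*} [Group G]

lemma conj_comp (g h : G) :
    (MulAut.conj g).toMonoidHom.comp (MulAut.conj h).toMonoidHom
      = (MulAut.conj (g * h)).toMonoidHom := by
  ext x
  simp [MulAut.conj_apply, mul_assoc]

lemma mem_normalizer_iff_map {S : Subgroup G} {x : G} :
    x ∈ (Subgroup.normalizer (SetLike.coe S)) ↔ S.map (MulAut.conj x).toMonoidHom = S := by
  constructor
  · intro hx
    ext y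
    simp only [Subgroup.mem_map, MulEquiv.coe_toMonoidHom, MulAut.conj_apply]
    constructor
    · rintro ⟨a, ha, rfl⟩
      exact (Subgroup.mem_normalizer_iff.mp hx a).mp ha
    · intro hy
      have h2 : x * (x⁻¹ * y * x) * x⁻¹ = y := by group
      refine ⟨x⁻¹ * y * x, ?_, h2⟩
      exact (Subgroup.mem_normalizer_iff.mp hx (x⁻¹ * y * x)).mpr (by rw [h2]; exact hy)
  · intro hmap
    rw [Subgroup.mem_normalizer_iff]
    intro h
    constructor
    · intro hh
      rw [← hmap]
      exact ⟨h, hh, rfl⟩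
    · intro hh
      rw [← hmap] at hh
      obtain ⟨a, ha, he⟩ := hh
      simp only [MulEquiv.coe_toMonoidHom, MulAut.conj_apply] at he
      have : a = h := mul_left_cancel (mul_right_cancel he)
      rwa [← this]

lemma le_normalizer_sup {K A B : Subgroup G} (hA : K ≤ (Subgroup.normalizer (SetLike.coe A)))
    (hB : K ≤ (Subgroup.normalizer (SetLike.coe B))) : K ≤ (Subgroup.normalizer (SetLike.coe (A ⊔ B))) := by
  intro x hx
  rw [mem_normalizer_iff_map]
  rw [Subgroup.map_sup, mem_normalizer_iff_map.mp (hA hx), mem_normalizer_iff_map.mp (hB hx)]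

lemma card_sup_dvd {A B : Subgroup G} (h : A ≤ (Subgroup.normalizer (SetLike.coe B))) :
    Nat.card ↥(A ⊔ B) ∣ Nat.card ↥A * Nat.card ↥B := by
  have hB : B ≤ A ⊔ B := le_sup_right
  have key : Nat.card ↥(A ⊔ B) = B.relIndex (A ⊔ B) * Nat.card ↥B := by
    have h1 := Subgroup.card_eq_card_quotient_mul_card_subgroup (B.subgroupOf (A ⊔ B))
    have h2 : Nat.card ↥(B.subgroupOf (A ⊔ B)) = Nat.card ↥B :=
      Nat.card_congr (Subgroup.subgroupOfEquivOfLe hB).toEquiv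
    rw [h2] at h1
    exact h1
  have hdvd : B.relIndex (A ⊔ B) ∣ Nat.card ↥A := by
    have hAN : A ≤ (Subgroup.normalizer (SetLike.coe B)) := h
    have hBN : B ≤ (Subgroup.normalizer (SetLike.coe B)) := Subgroup.le_normalizer
    have hsupN : A ⊔ B ≤ (Subgroup.normalizer (SetLike.coe B)) := sup_le hAN hBN
    rw [← Subgroup.relIndex_subgroupOf hsupN]
    rw [Subgroup.subgroupOf_sup hAN hBN]
    haveI : (B.subgroupOf (Subgroup.normalizer (SetLike.coe B))).Normal := Subgroup.normal_in_normalizer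
    rw [Subgroup.relIndex_sup_right]
    have : (B.subgroupOf (Subgroup.normalizer (SetLike.coe B))).relIndex (A.subgroupOf (Subgroup.normalizer (SetLike.coe B)))
        ∣ Nat.card ↥(A.subgroupOf (Subgroup.normalizer (SetLike.coe B))) :=
      Subgroup.index_dvd_card _
    have hcard : Nat.card ↥(A.subgroupOf (Subgroup.normalizer (SetLike.coe B))) = Nat.card ↥A :=
      Nat.card_congr (Subgroup.subgroupOfEquivOfLe hAN).toEquiv
    rwa [hcard] at this
  rw [key]
  exact mul_dvd_mul hdvd dvd_rfl

end Helpers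


lemma relindex_map_dvd {G G' : Type*} [Group G] [Group G'] (f : G →* G')
    {A B : Subgroup G} (hAB : A ≤ B) :
    ((A.map f).relIndex (B.map f)) ∣ A.relIndex B := by
  have hker : (A.map f).subgroupOf (B.map f) = (A.subgroupOf B).map (f.subgroupMap B) := by
    ext y
    simp only [mem_subgroupOf, Subgroup.mem_map]
    constructor
    · rintro ⟨a, ha, he⟩
      refine ⟨⟨a, hAB ha⟩, ?_, ?_⟩
      · simpa [mem_subgroupOf] using ha
      · apply Subtype.ext
        simpa using he
    · rintro ⟨z, hz, rfl⟩
      refine ⟨↑z, by simpa [mem_subgroupOf] using hz, by simp⟩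
  show ((A.map f).subgroupOf (B.map f)).index ∣ (A.subgroupOf B).index
  rw [hker]
  exact Subgroup.index_map_dvd _ (MonoidHom.subgroupMap_surjective f B)

lemma isPSolvable_quotient (p : ℕ) {H : Type*} [Group H] (N : Subgroup H) [N.Normal]
    (h : IsPSolvable p H) : IsPSolvable p (H ⧸ N) := by
  obtain ⟨n, c, h0, hl, hstep⟩ := h
  refine ⟨n, fun i => (c i).map (QuotientGroup.mk' N), ?_, ?_, ?_⟩
  · show (c 0).map _ = ⊥
    rw [h0]; exact Subgroup.map_bot _
  · show (c (Fin.last n)).map _ = ⊤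
    rw [hl]; exact Subgroup.map_top_of_surjective _ (QuotientGroup.mk'_surjective N)
  · intro i
    obtain ⟨l1, l2, l3⟩ := hstep i
    have hle : (c i.castSucc).map (QuotientGroup.mk' N)
        ≤ (c i.succ).map (QuotientGroup.mk' N) := Subgroup.map_mono l1
    refine ⟨hle, ?_, ?_⟩
    · rw [normal_subgroupOf_iff hle]
      rintro h' k' hh hk
      obtain ⟨x, hx, rfl⟩ := hh
      obtain ⟨g, hg, rfl⟩ := hk
      have hm : g * x * g⁻¹ ∈ c i.castSucc := (normal_subgroupOf_iff l1).mp l2 x g hx hg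
      exact ⟨g * x * g⁻¹, hm, by simp⟩
    · rcases l3 with l3 | l3
      · left
        rintro x hx
        obtain ⟨g, hg, rfl⟩ := hx
        obtain ⟨m, hm⟩ := l3 g hg
        exact ⟨m, ⟨g ^ p ^ m, hm, by simp⟩⟩
      · right
        intro hdvd
        exact l3 (hdvd.trans (relindex_map_dvd _ l1))

theorem exists_normal_p_or_p' (p : ℕ) (hp : p.Prime) :
    ∀ (n : ℕ) (H : Type u) (_ : Group H) (_ : Finite H)
      (c : Fin (n + 1) → Subgroup H),
      c 0 = ⊥ → c (Fin.last n) = ⊤ →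
      (∀ i : Fin n, c i.castSucc ≤ c i.succ ∧
        ((c i.castSucc).subgroupOf (c i.succ)).Normal ∧
        ((∀ x ∈ c i.succ, ∃ m : ℕ, x ^ (p ^ m) ∈ c i.castSucc) ∨
          ¬ p ∣ (c i.castSucc).relIndex (c i.succ))) →
      Nontrivial H →
      ∃ N : Subgroup H, N.Normal ∧ N ≠ ⊥ ∧ (IsPGroup p ↥N ∨ ¬ p ∣ Nat.card ↥N) := by
  intro n
  induction n with
  | zero =>
    intro H _ _ c h0 hl _ hnt
    exact absurd (h0.symm.trans hl) bot_ne_top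
  | succ n ihn =>
    intro H _ _ c h0 hl hstep hnt
    obtain ⟨hKle, hKnorm, hKtop⟩ := hstep (Fin.last n)
    have hsucc : (Fin.last n).succ = Fin.last (n + 1) := rfl
    rw [hsucc, hl] at hKle hKnorm hKtop
    set K := c (Fin.castSucc (Fin.last n)) with hKdef
    have hKnormal : K.Normal := by
      have h := (normal_subgroupOf_iff le_top).mp hKnorm
      exact ⟨fun x hx g => h x g hx trivial⟩
    by_cases hKbot : K = ⊥
    · refine ⟨⊤, inferInstance, fun h => bot_ne_top h.symm, ?_⟩
      rcases hKtop with hppow | hrel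
      · left
        intro g
        obtain ⟨m, hm⟩ := hppow (g : H) trivial
        rw [hKbot, Subgroup.mem_bot] at hm
        exact ⟨m, by ext; simpa using hm⟩
      · right
        rw [hKbot, relIndex_bot_left] at hrel
        exact hrel
    · haveI hKnt : Nontrivial ↥K := (nontrivial_iff_ne_bot K).mpr hKbot
      have hmono : Monotone c := Fin.monotone_iff_le_succ.mpr fun i => (hstep i).1
      have hcK : ∀ j : Fin (n + 1), c j.castSucc ≤ K :=
        fun j => hmono (Fin.castSucc_le_castSucc_iff.mpr (Fin.le_last j))
      set d : Fin (n + 1) → Subgroup ↥K := fun j => (c j.castSucc).subgroupOf K with hd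
      have hd0 : d 0 = ⊥ := by
        have h00 : ((0 : Fin (n + 1)).castSucc) = (0 : Fin (n + 2)) := rfl
        show (c ((0 : Fin (n + 1)).castSucc)).subgroupOf K = ⊥
        rw [h00, h0, Subgroup.bot_subgroupOf]
      have hdl : d (Fin.last n) = ⊤ := Subgroup.subgroupOf_self K
      have hdstep : ∀ i : Fin n, d i.castSucc ≤ d i.succ ∧
          ((d i.castSucc).subgroupOf (d i.succ)).Normal ∧
          ((∀ x ∈ d i.succ, ∃ m : ℕ, x ^ (p ^ m) ∈ d i.castSucc) ∨
            ¬ p ∣ (d i.castSucc).relIndex (d i.succ)) := by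
        intro i
        obtain ⟨l1, l2, l3⟩ := hstep i.castSucc
        rw [Fin.succ_castSucc] at l1 l2 l3
        have hle : d i.castSucc ≤ d i.succ := by
          intro x hx
          rw [hd, mem_subgroupOf] at hx ⊢
          exact l1 hx
        refine ⟨hle, ?_, ?_⟩
        · rw [normal_subgroupOf_iff hle]
          intro x g hx hg
          rw [hd, mem_subgroupOf] at hx hg ⊢
          push_cast
          exact (normal_subgroupOf_iff l1).mp l2 _ _ hx hg
        · rcases l3 with l3 | l3
          · left
            intro x hx
            rw [hd, mem_subgroupOf] at hx
            obtain ⟨m, hm⟩ := l3 (x : H) hx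
            refine ⟨m, ?_⟩
            rw [hd, mem_subgroupOf]
            push_cast
            exact hm
          · right
            rw [hd]
            rwa [Subgroup.relIndex_subgroupOf (hcK i.succ)]
      obtain ⟨M, hMnorm, hMbot, hMp⟩ := ihn ↥K inferInstance inferInstance d hd0 hdl hdstep hKnt
      set M' := M.map K.subtype with hM'def
      have hM'K : M' ≤ K := map_subtype_le M
      have hM'bot : M' ≠ ⊥ := by
        rw [Ne, map_eq_bot_iff_of_injective M (Subgroup.subtype_injective K)]
        exact hMbot
      have hM'card : Nat.card ↥M' = Nat.card ↥M :=
        (Nat.card_congr (Subgroup.equivMapOfInjective M K.subtype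
          (Subgroup.subtype_injective K)).toEquiv).symm
      have hM'norm : ∀ x ∈ K, ∀ m ∈ M', x * m * x⁻¹ ∈ M' := by
        intro x hx m hm
        obtain ⟨m₀, hm₀, rfl⟩ := hm
        have hc := hMnorm.conj_mem m₀ hm₀ ⟨x, hx⟩
        refine ⟨_, hc, ?_⟩
        push_cast
        rfl
      set C : H → Subgroup H := fun g => M'.map (MulAut.conj g).toMonoidHom with hC
      have hC1 : C 1 = M' := by
        rw [hC]
        simp only [map_one]
        have : (1 : MulAut H).toMonoidHom = MonoidHom.id H := rfl
        rw [this, Subgroup.map_id]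
      have hCle : ∀ g, C g ≤ K := by
        rintro g x hx
        obtain ⟨m, hm, rfl⟩ := hx
        simp only [MulEquiv.coe_toMonoidHom, MulAut.conj_apply]
        exact hKnormal.conj_mem m (hM'K hm) g
      have hCnormK : ∀ g, ∀ x ∈ K, ∀ y ∈ C g, x * y * x⁻¹ ∈ C g := by
        intro g x hx y hy
        obtain ⟨m, hm, rfl⟩ := hy
        have hx' : g⁻¹ * x * g ∈ K := by
          have := hKnormal.conj_mem x hx g⁻¹
          simpa using this
        have hmm : (g⁻¹ * x * g) * m * (g⁻¹ * x * g)⁻¹ ∈ M' := hM'norm _ hx' m hm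
        refine ⟨_, hmm, ?_⟩
        simp only [MulEquiv.coe_toMonoidHom, MulAut.conj_apply]
        group
      have hCnorm : ∀ g, K ≤ (Subgroup.normalizer (SetLike.coe (C g))) := by
        intro g x hx
        rw [Subgroup.mem_normalizer_iff]
        intro h
        constructor
        · exact fun hh => hCnormK g x hx h hh
        · intro hh
          have h2 := hCnormK g x⁻¹ (K.inv_mem hx) _ hh
          have h3 : x⁻¹ * (x * h * x⁻¹) * x⁻¹⁻¹ = h := by group
          rwa [h3] at h2
      have hCcard : ∀ g, Nat.card ↥(C g) = Nat.card ↥M' := fun g =>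
        (Nat.card_congr (Subgroup.equivMapOfInjective M' _
          ((MulAut.conj g).injective)).toEquiv).symm
      set N := ⨆ g : H, C g with hNdef
      have hNmap : ∀ g : H, N.map (MulAut.conj g).toMonoidHom = N := by
        intro g
        rw [hNdef, Subgroup.map_iSup]
        apply le_antisymm
        · refine iSup_le fun h => ?_
          rw [hC]
          rw [Subgroup.map_map, conj_comp]
          exact le_iSup C (g * h)
        · refine iSup_le fun h => ?_
          have : C h = (C (g⁻¹ * h)).map (MulAut.conj g).toMonoidHom := by
            rw [hC]
            rw [Subgroup.map_map, conj_comp, mul_inv_cancel_left]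
          rw [this]
          exact le_iSup (fun h' => (C h').map (MulAut.conj g).toMonoidHom) (g⁻¹ * h)
      have hNnormal : N.Normal := by
        constructor
        intro x hx g
        have h1 : (MulAut.conj g).toMonoidHom x ∈ N.map (MulAut.conj g).toMonoidHom :=
          Subgroup.mem_map_of_mem _ hx
        rw [hNmap] at h1
        simpa only [MulEquiv.coe_toMonoidHom, MulAut.conj_apply] using h1
      have hNne : N ≠ ⊥ := by
        intro h
        apply hM'bot
        have hle : M' ≤ N := hC1 ▸ le_iSup C 1
        rw [h] at hle
        exact le_bot_iff.mp hle
      refine ⟨N, hNnormal, hNne, ?_⟩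
      have main : ∀ (Pp : Subgroup H → Prop), Pp ⊥ → (∀ g, Pp (C g)) →
          (∀ A B : Subgroup H, A ≤ K → K ≤ (Subgroup.normalizer (SetLike.coe A)) → B ≤ K → K ≤ (Subgroup.normalizer (SetLike.coe B)) →
            Pp A → Pp B → Pp (A ⊔ B)) → Pp N := by
        intro Pp hbot hCp hsup
        classical
        letI : Fintype H := Fintype.ofFinite H
        have key : ∀ s : Finset H, (⨆ g ∈ s, C g) ≤ K ∧ K ≤ (Subgroup.normalizer (SetLike.coe (⨆ g ∈ s, C g))) ∧
            Pp (⨆ g ∈ s, C g) := by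
          intro s
          induction s using Finset.induction with
          | empty =>
            simp only [Finset.notMem_empty, iSup_false, iSup_bot]
            refine ⟨bot_le, ?_, hbot⟩
            intro x _
            rw [Subgroup.mem_normalizer_iff]
            intro h
            simp [Subgroup.mem_bot]
          | insert _ _ hx ih =>
            rename_i a s
            obtain ⟨ih1, ih2, ih3⟩ := ih
            rw [Finset.iSup_insert]
            exact ⟨sup_le (hCle a) ih1,
              le_normalizer_sup (hCnorm a) ih2,
              hsup _ _ (hCle a) (hCnorm a) ih1 ih2 (hCp a) ih3⟩
        have hNuniv : N = ⨆ g ∈ (Finset.univ : Finset H), C g := by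
          apply le_antisymm
          · exact iSup_le fun g => le_iSup₂ (f := fun g _ => C g) g (Finset.mem_univ g)
          · exact iSup₂_le fun g _ => le_iSup C g
        rw [hNuniv]
        exact (key Finset.univ).2.2
      rcases hMp with hPg | hPc
      · left
        refine main (fun D => IsPGroup p ↥D) IsPGroup.of_bot
          (fun g => (hPg.map K.subtype).map _) ?_
        intro A B hA hnA hB hnB pA pB
        exact IsPGroup.to_sup_of_normal_right' pA pB (hA.trans hnB)
      · right
        refine main (fun D => ¬ p ∣ Nat.card ↥D) ?_ ?_ ?_
        · show ¬ p ∣ Nat.card ↥(⊥ : Subgroup H)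
          rw [Subgroup.card_bot]
          intro hdvd
          exact hp.one_lt.ne' (Nat.dvd_one.mp hdvd)
        · intro g
          show ¬ p ∣ Nat.card ↥(C g)
          rw [hCcard, hM'card]
          exact hPc
        · intro A B hA hnA hB hnB pA pB
          show ¬ p ∣ Nat.card ↥(A ⊔ B)
          intro hdvd
          have hcd := card_sup_dvd (hA.trans hnB)
          rcases (Nat.Prime.dvd_mul hp).mp (hdvd.trans hcd) with h | h
          · exact pA h
          · exact pB h

lemma mem_fixedSubmodule {k H V : Type*} [Semiring k] [AddCommMonoid V] [Module k V]
    [Monoid H] [DistribMulAction H V] [SMulCommClass H k V] {v : V} :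
    v ∈ fixedSubmodule k H (V := V) ↔ ∀ h : H, h • v = v := Iff.rfl

section QuotAction

variable {H : Type*} [Group H] {N : Subgroup H} [N.Normal] {V : Type*} [AddCommMonoid V]
  [DistribMulAction H V]

/-- The action of a quotient group on a module on which the subgroup acts trivially. -/
def quotAct (htriv : ∀ n ∈ N, ∀ v : V, n • v = v) : DistribMulAction (H ⧸ N) V where
  smul x v := Quotient.liftOn' x (fun g => g • v) (fun g₁ g₂ hg => by
    rw [QuotientGroup.leftRel_apply] at hg
    show g₁ • v = g₂ • v
    have h1 : g₂ • v = (g₁ * (g₁⁻¹ * g₂)) • v := by rw [mul_inv_cancel_left]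
    rw [h1, mul_smul, htriv _ hg])
  one_smul v := by
    show Quotient.liftOn' (QuotientGroup.mk (1 : H)) (fun g => g • v) _ = v
    show (1 : H) • v = v
    exact one_smul H v
  mul_smul x y v := by
    induction x using Quotient.inductionOn' with | h g =>
    induction y using Quotient.inductionOn' with | h g' =>
    show Quotient.liftOn' (QuotientGroup.mk (g * g')) (fun g => g • v) _ = _
    show (g * g') • v = Quotient.liftOn' (QuotientGroup.mk g) _ _
    show (g * g') • v = g • (g' • v)
    exact mul_smul g g' v
  smul_zero x := by
    induction x using Quotient.inductionOn' with | h g =>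
    show g • (0 : V) = 0
    exact smul_zero g
  smul_add x u v := by
    induction x using Quotient.inductionOn' with | h g =>
    show g • (u + v) = g • u + g • v
    exact smul_add g u v

lemma quotAct_mk (htriv : ∀ n ∈ N, ∀ v : V, n • v = v) (g : H) (v : V) :
    letI := quotAct htriv
    (QuotientGroup.mk g : H ⧸ N) • v = g • v := rfl

end QuotAction

universe w

lemma aux_main {k : Type w} [Field k] (p : ℕ) (hp : p.Prime) (hchar : CharP k p) :
    ∀ (nn : ℕ) (H : Type u) (_ : Group H) (_ : Finite H), Nat.card H ≤ nn →
    ∀ (V : Type v) (_ : AddCommGroup V) (_ : Module k V) (_ : DistribMulAction H V)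
      (_ : SMulCommClass H k V),
    IsPSolvable p H →
    ∀ (a : V) (Q : Subgroup H), IsPGroup p ↥Q → ¬ p ∣ Q.index → (∀ h ∈ Q, h • a = a) →
    Submodule.span k (MulAction.orbit H a) = ⊤ →
    Module.rank k ↥(fixedSubmodule k H (V := V)) ≤ 1 := by
  haveI : Fact p.Prime := ⟨hp⟩
  intro nn
  induction nn with
  | zero =>
    intro H _ _ hcard
    have := Nat.card_pos (α := H)
    omega
  | succ nn ih =>
    intro H instG instF hcard V instA instM instD instS hps a Q hQp hQi hQa hspan
    by_cases hTriv : Subsingleton H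
    · -- trivial group: V is spanned by a
      have horb : MulAction.orbit H a = {a} := by
        ext v
        simp only [MulAction.mem_orbit_iff, Set.mem_singleton_iff]
        constructor
        · rintro ⟨g, rfl⟩
          rw [Subsingleton.elim g 1, one_smul]
        · intro hv
          exact ⟨1, by rw [one_smul, hv]⟩
      have h1 : Module.rank k ↥(fixedSubmodule k H (V := V)) ≤ Module.rank k V :=
        Submodule.rank_le _
      have h2 : Module.rank k V = Module.rank k ↥(Submodule.span k (MulAction.orbit H a)) := by
        rw [hspan, rank_top]
      have h3 : Module.rank k ↥(Submodule.span k (MulAction.orbit H a)) ≤ 1 := by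
        rw [horb]
        refine (rank_span_le _).trans ?_
        rw [Cardinal.mk_singleton]
      exact h1.trans (h2.le.trans h3)
    · have hnt : Nontrivial H := not_subsingleton_iff_nontrivial.mp hTriv
      obtain ⟨n, c, h0, hl, hstep⟩ := hps
      obtain ⟨N, hNnorm, hNbot, hNp⟩ :=
        exists_normal_p_or_p' p hp n H inferInstance inferInstance c h0 hl hstep hnt
      haveI := hNnorm
      have hcardlt : Nat.card (H ⧸ N) ≤ nn := by
        have h1 : Nat.card H = Nat.card (H ⧸ N) * Nat.card ↥N :=
          Subgroup.card_eq_card_quotient_mul_card_subgroup N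
        have h2 : 2 ≤ Nat.card ↥N := by
          exact (Subgroup.one_lt_card_iff_ne_bot (H := N)).mpr hNbot
        have h3 : 0 < Nat.card (H ⧸ N) := Nat.card_pos
        have h4 : Nat.card (H ⧸ N) * 2 ≤ Nat.card H := by
          rw [h1]
          exact Nat.mul_le_mul_left _ h2
        omega
      have hpsQ : IsPSolvable p (H ⧸ N) := isPSolvable_quotient p N ⟨n, c, h0, hl, hstep⟩
      have hπs : Function.Surjective (QuotientGroup.mk' N) := QuotientGroup.mk'_surjective N
      have hQp' : IsPGroup p ↥(Q.map (QuotientGroup.mk' N)) := hQp.map _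
      have hQi' : ¬ p ∣ (Q.map (QuotientGroup.mk' N)).index :=
        fun h => hQi (h.trans (Subgroup.index_map_dvd Q hπs))
      -- conjugation stays in N
      have hconjN : ∀ g : H, ∀ x ∈ N, g⁻¹ * x * g ∈ N := by
        intro g x hx
        have := hNnorm.conj_mem x hx g⁻¹
        simpa using this
      rcases hNp with hNpg | hNpc
      · -- `N` is a normal `p`-subgroup, hence contained in `Q` and acting trivially on `V`.
        have hNQ : N ≤ Q := by
          haveI : Finite ↥(N ⊔ Q : Subgroup H) := inferInstance
          have hsup : IsPGroup p ↥(N ⊔ Q : Subgroup H) :=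
            IsPGroup.to_sup_of_normal_left hNpg hQp
          obtain ⟨m, hm⟩ := IsPGroup.iff_card.mp hsup
          have h1 : Q.relIndex (N ⊔ Q) ∣ p ^ m := by
            rw [← hm]
            exact Subgroup.index_dvd_card _
          obtain ⟨j, hj, hjrel⟩ := (Nat.dvd_prime_pow hp).mp h1
          have h2 : Q.relIndex (N ⊔ Q) ∣ Q.index :=
            Subgroup.relIndex_dvd_index_of_le le_sup_right
          have hj0 : j = 0 := by
            by_contra hj0
            apply hQi
            have : p ∣ Q.relIndex (N ⊔ Q) := hjrel ▸ dvd_pow_self p hj0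
            exact this.trans h2
          rw [hj0, pow_zero] at hjrel
          have h3 : N ⊔ Q ≤ Q := Subgroup.relIndex_eq_one.mp hjrel
          exact le_sup_left.trans h3
        have htriv : ∀ x ∈ N, ∀ v : V, x • v = v := by
          have horb : ∀ x ∈ N, ∀ h : H, x • (h • a) = h • a := by
            intro x hx h
            have h2 : x • (h • a) = h • ((h⁻¹ * x * h) • a) := by
              rw [smul_smul, smul_smul]
              congr 1
              group
            rw [h2, hQa _ (hNQ (hconjN h x hx))]
          intro x hx v
          have hv : v ∈ Submodule.span k (MulAction.orbit H a) := by
            rw [hspan]; trivial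
          induction hv using Submodule.span_induction with
          | mem b hb =>
            obtain ⟨h, rfl⟩ := hb
            exact horb x hx h
          | zero => exact smul_zero x
          | add u v _ _ hu hv => rw [smul_add, hu, hv]
          | smul c u _ hu => rw [smul_comm, hu]
        letI actQ : DistribMulAction (H ⧸ N) V := quotAct htriv
        haveI : SMulCommClass (H ⧸ N) k V := by
          constructor
          intro x c v
          induction x using Quotient.inductionOn' with | h g =>
          exact smul_comm g c v
        have hfix_eq : fixedSubmodule k H (V := V) = fixedSubmodule k (H ⧸ N) (V := V) := by
          ext v
          rw [mem_fixedSubmodule, mem_fixedSubmodule]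
          constructor
          · intro hv x
            induction x using Quotient.inductionOn' with | h g =>
            exact hv g
          · intro hv g
            exact hv (QuotientGroup.mk g)
        rw [hfix_eq]
        refine ih (H ⧸ N) inferInstance inferInstance hcardlt V instA instM actQ
          inferInstance hpsQ a (Q.map (QuotientGroup.mk' N)) hQp' hQi' ?_ ?_
        · rintro x hx
          obtain ⟨q, hq, rfl⟩ := hx
          show q • a = a
          exact hQa q hq
        · have horbeq : MulAction.orbit (H ⧸ N) a = MulAction.orbit H a := by
            ext v
            rw [MulAction.mem_orbit_iff, MulAction.mem_orbit_iff]
            constructor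
            · rintro ⟨x, rfl⟩
              induction x using Quotient.inductionOn' with | h g =>
              exact ⟨g, rfl⟩
            · rintro ⟨g, rfl⟩
              exact ⟨QuotientGroup.mk g, rfl⟩
          rw [horbeq, hspan]
      · -- `N` is a normal `p'`-subgroup
        letI : Fintype ↥N := Fintype.ofFinite ↥N
        have hq0 : ((Nat.card ↥N : k)) ≠ 0 := by
          intro h
          exact hNpc ((CharP.cast_eq_zero_iff k p _).mp h)
        set W : Submodule k V :=
          { carrier := {v | ∀ x ∈ N, x • v = v}
            add_mem' := fun {u w} hu hw x hx => by rw [smul_add, hu x hx, hw x hx]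
            zero_mem' := fun x hx => smul_zero x
            smul_mem' := fun c v hv x hx => by rw [smul_comm, hv x hx] } with hWdef
        have hsmulW : ∀ (g : H), ∀ v ∈ W, g • v ∈ W := by
          intro g v hv x hx
          have h2 : x • (g • v) = g • ((g⁻¹ * x * g) • v) := by
            rw [smul_smul, smul_smul]; congr 1; group
          rw [h2, hv _ (hconjN g x hx)]
        letI instWsmul : SMul H ↥W := ⟨fun g w => ⟨g • (w : V), hsmulW g w w.2⟩⟩
        have hWsmul_coe : ∀ (g : H) (w : ↥W), ((g • w : ↥W) : V) = g • (w : V) :=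
          fun _ _ => rfl
        letI instWact : DistribMulAction H ↥W :=
          { smul := fun g w => g • w
            one_smul := fun w => Subtype.ext (by rw [hWsmul_coe, one_smul])
            mul_smul := fun g g' w => Subtype.ext (by
              rw [hWsmul_coe, hWsmul_coe, hWsmul_coe, mul_smul])
            smul_zero := fun g => Subtype.ext (by
              rw [hWsmul_coe, ZeroMemClass.coe_zero, smul_zero])
            smul_add := fun g u w => Subtype.ext (by
              rw [hWsmul_coe, AddMemClass.coe_add, AddMemClass.coe_add, hWsmul_coe, hWsmul_coe,
                smul_add]) }
        haveI instWcomm : SMulCommClass H k ↥W := by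
          constructor
          intro g c w
          apply Subtype.ext
          rw [hWsmul_coe, SetLike.val_smul, SetLike.val_smul, hWsmul_coe]
          exact smul_comm g c (w : V)
        have htrivW : ∀ x ∈ N, ∀ w : ↥W, x • w = w := fun x hx w => Subtype.ext (w.2 x hx)
        letI actQW : DistribMulAction (H ⧸ N) ↥W := quotAct htrivW
        haveI : SMulCommClass (H ⧸ N) k ↥W := by
          constructor
          intro x c w
          induction x using Quotient.inductionOn' with | h g =>
          exact smul_comm g c w
        set S : V →ₗ[k] V := ∑ x : ↥N, DistribMulAction.toLinearMap k V ((x : H) : H) with hSdef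
        set E : V →ₗ[k] V := (Nat.card ↥N : k)⁻¹ • S with hEdef
        have hSapply : ∀ v : V, S v = ∑ x : ↥N, ((x : H) • v) := by
          intro v
          rw [hSdef, LinearMap.coe_sum, Finset.sum_apply]
          rfl
        have hEapply : ∀ v : V, E v = (Nat.card ↥N : k)⁻¹ • ∑ x : ↥N, ((x : H) • v) := by
          intro v
          rw [hEdef, LinearMap.smul_apply, hSapply]
        have hSfix : ∀ x ∈ N, ∀ v : V,
            x • (∑ y : ↥N, ((y : H) • v)) = ∑ y : ↥N, ((y : H) • v) := by
          intro x hx v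
          rw [Finset.smul_sum]
          have hre := Equiv.sum_comp (Equiv.mulLeft (⟨x, hx⟩ : ↥N))
            (fun y : ↥N => ((y : H) • v))
          rw [← hre]
          apply Finset.sum_congr rfl
          intro y _
          rw [smul_smul]
          rfl
        have hEW : ∀ v : V, E v ∈ W := by
          intro v x hx
          rw [hEapply, smul_comm, hSfix x hx]
        have hEfixW : ∀ w ∈ W, E w = w := by
          intro w hw
          rw [hEapply]
          have h1 : ∑ x : ↥N, ((x : H) • w) = (Nat.card ↥N) • w := by
            have hterm : ∀ x : ↥N, (x : H) • w = w := fun x => hw (x : H) x.2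
            calc ∑ x : ↥N, ((x : H) • w) = ∑ _x : ↥N, w :=
                  Finset.sum_congr rfl (fun x _ => hterm x)
              _ = (Nat.card ↥N) • w := by
                  simp [Finset.card_univ, Nat.card_eq_fintype_card]
          rw [h1, ← Nat.cast_smul_eq_nsmul k, smul_smul, inv_mul_cancel₀ hq0, one_smul]
        have hEcomm : ∀ (g : H) (v : V), E (g • v) = g • E v := by
          intro g v
          rw [hEapply, hEapply, smul_comm]
          congr 1
          have hre := Equiv.sum_comp ((MulAut.conjNormal g⁻¹ : MulAut ↥N)).toEquiv
            (fun y : ↥N => ((g * (y : H)) • v))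
          calc ∑ x : ↥N, (x : H) • g • v
              = ∑ x : ↥N, (g * ((MulAut.conjNormal g⁻¹ x : ↥N) : H)) • v := by
                apply Finset.sum_congr rfl
                intro x _
                rw [smul_smul]
                congr 1
                rw [MulAut.conjNormal_apply]
                group
            _ = ∑ x : ↥N, (g * (x : H)) • v := hre
            _ = ∑ x : ↥N, g • ((x : H) • v) := by
                apply Finset.sum_congr rfl
                intro x _
                rw [mul_smul]
            _ = g • ∑ x : ↥N, ((x : H) • v) := (Finset.smul_sum).symm
        set b : V := E a with hbdef
        have hbW : b ∈ W := hEW a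
        have hbfix : ∀ g ∈ Q, g • b = b := fun g hg => by
          rw [hbdef, ← hEcomm, hQa g hg]
        set bW : ↥W := ⟨b, hbW⟩ with hbWdef
        have hspanb : ∀ w : V, w ∈ W → w ∈ Submodule.span k (MulAction.orbit H b) := by
          intro w hw
          have h1 : w ∈ Submodule.map E (Submodule.span k (MulAction.orbit H a)) := by
            rw [hspan]
            exact ⟨w, trivial, hEfixW w hw⟩
          rw [Submodule.map_span] at h1
          refine Submodule.span_mono ?_ h1
          rintro x ⟨y, ⟨g, rfl⟩, rfl⟩
          exact ⟨g, (hEcomm g a).symm⟩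
        have horbW : (W.subtype) '' (MulAction.orbit (H ⧸ N) bW) = MulAction.orbit H b := by
          ext v
          constructor
          · rintro ⟨u, ⟨x, rfl⟩, rfl⟩
            induction x using Quotient.inductionOn' with | h g =>
            exact ⟨g, rfl⟩
          · rintro ⟨g, rfl⟩
            exact ⟨(QuotientGroup.mk g : H ⧸ N) • bW, ⟨QuotientGroup.mk g, rfl⟩, rfl⟩
        have hspanW : Submodule.span k (MulAction.orbit (H ⧸ N) bW) = ⊤ := by
          rw [Submodule.eq_top_iff']
          intro w
          have h1 : (w : V) ∈ Submodule.span k (W.subtype '' (MulAction.orbit (H ⧸ N) bW)) := by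
            rw [horbW]
            exact hspanb w w.2
          rw [← Submodule.map_span] at h1
          obtain ⟨y, hy, hyw⟩ := Submodule.mem_map.mp h1
          have hyw' : y = w := Subtype.ext hyw
          rwa [← hyw']
        have hFW : ∀ v : V, v ∈ fixedSubmodule k H (V := V) → v ∈ W := fun v hv x hx => hv x
        have hF'mem : ∀ v : ↥(fixedSubmodule k H (V := V)),
            (⟨(v : V), hFW _ v.2⟩ : ↥W) ∈ fixedSubmodule k (H ⧸ N) (V := ↥W) := by
          intro v x
          induction x using Quotient.inductionOn' with | h g =>
          exact Subtype.ext (v.2 g)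
        set φ : ↥(fixedSubmodule k H (V := V)) →ₗ[k] ↥(fixedSubmodule k (H ⧸ N) (V := ↥W)) :=
          { toFun := fun v => ⟨⟨(v : V), hFW _ v.2⟩, hF'mem v⟩
            map_add' := fun u v => by
              apply Subtype.ext; apply Subtype.ext; rfl
            map_smul' := fun c v => by
              apply Subtype.ext; apply Subtype.ext; rfl } with hφdef
        have hφinj : Function.Injective φ := by
          intro u v huv
          apply Subtype.ext
          exact congrArg (fun z : ↥(fixedSubmodule k (H ⧸ N) (V := ↥W)) => ((z : ↥W) : V)) huv
        refine (LinearMap.rank_le_of_injective φ hφinj).trans ?_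
        refine ih (H ⧸ N) inferInstance inferInstance hcardlt ↥W inferInstance inferInstance
          actQW inferInstance hpsQ bW (Q.map (QuotientGroup.mk' N)) hQp' hQi' ?_ hspanW
        rintro x hx
        obtain ⟨g, hg, rfl⟩ := hx
        apply Subtype.ext
        show g • b = b
        exact hbfix g hg


/-- Over a field of characteristic `p > 0`, if `H` is a `p`-soluble
finite group, `a ∈ V` is fixed by some Sylow `p`-subgroup of `H`, and the `H`-orbit of
`a` spans `V`, then `dim C_V(H) ≤ 1`. -/
theorem stmt3 {k V H : Type*} [Field k] [AddCommGroup V] [Module k V]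
    [Group H] [Finite H] [DistribMulAction H V] [SMulCommClass H k V]
    (p : ℕ) (hp : p.Prime) (hchar : CharP k p)
    (hps : IsPSolvable p H)
    (a : V) (P : Sylow p H) (hPa : ∀ h ∈ (P : Subgroup H), h • a = a)
    (hspan : Submodule.span k (MulAction.orbit H a) = ⊤) :
    Module.rank k (fixedSubmodule k H (V := V)) ≤ 1 := by
  haveI : Fact p.Prime := ⟨hp⟩
  exact aux_main p hp hchar (Nat.card H) H inferInstance inferInstance le_rfl V
    inferInstance inferInstance inferInstance inferInstance hps a (P : Subgroup H)
    P.isPGroup' P.not_dvd_index hPa hspan
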